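/- Suppose S and R are ℤ-graded commutative rings, ρ : S → R is a graded ring homomorphism, ι : R → S raises degree by 1, and δ ∈ R is homogeneous of degree 1, with ι(ρ(a)x) = aι(x) and ρ(ι(x)) = δx. Define deg^{(2)}([α]_i) = deg(α) if i ≥ 0 and deg(α)+1 if i < 0, for homogeneous α. Then the insertion product is additive for deg^{(2)}: deg^{(2)}([α]_i·[β]_j) = deg^{(2)}([α]_i) + deg^{(2)}([β]_j) whenever the product is nonzero and homogeneous. -/

import Mathlib

structure InsertionData (S R : Type) [CommRing S] [CommRing R] where
  res : S →+* R
  gys : R →+ S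
  δ : R
  proj : ∀ (a : S) (x : R), gys (res a * x) = a * gys x
  comp : ∀ x : R, res (gys x) = δ * x

abbrev Hins (S R : Type) [CommRing S] [CommRing R] : Type :=
  S × ({i : ℤ // i ≠ 0} →₀ R)

noncomputable def wgt {R : Type} [CommRing R] (δ : R) (i j : ℤ) : R :=
  if (i < 0 ∧ j < 0) ∨ (0 < i + j ∧ (i < 0 ∨ j < 0)) then δ else 1

noncomputable def mulH {S R : Type} [CommRing S] [CommRing R]
    (d : InsertionData S R) (x y : Hins S R) : Hins S R :=
  ( x.1 * y.1 + x.2.sum (fun i α => d.gys (α * y.2 ⟨-i.1, neg_ne_zero.mpr i.2⟩)),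
    y.2.mapRange (fun β => d.res x.1 * β) (by simp)
    + x.2.mapRange (fun α => α * d.res y.1) (by simp)
    + x.2.sum (fun i α => y.2.sum (fun j β =>
        if h : i.1 + j.1 ≠ 0 then
          Finsupp.single ⟨i.1 + j.1, h⟩ (wgt d.δ i.1 j.1 * (α * β))
        else 0)) )

/-- `x ∈ 𝔥` is homogeneous of degree `k` for `deg⁽¹⁾` (it lies in `𝔥_k`) and of degree `n`
for `deg⁽²⁾`: its component is a cohomology class of degree `n` if `k ≥ 0`, and of degree
`n - 1` if `k < 0` (the grading `deg⁽²⁾` is shifted by `+1` on the negative summands). -/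
def homogTwo {S R : Type} [CommRing S] [CommRing R]
    (SD : ℤ → AddSubgroup S) (RD : ℤ → AddSubgroup R)
    (k n : ℤ) (x : Hins S R) : Prop :=
  (k = 0 → x.2 = 0 ∧ x.1 ∈ SD n) ∧
  (∀ h : k ≠ 0, x.1 = 0 ∧ (∀ i : {i : ℤ // i ≠ 0}, i.1 ≠ k → x.2 i = 0) ∧
    x.2 ⟨k, h⟩ ∈ RD (if k < 0 then n - 1 else n))


private lemma mem_of_eq {R : Type} [CommRing R] (RD : ℤ → AddSubgroup R) {p q : ℤ} {a : R}
    (h : a ∈ RD p) (e : p = q) : a ∈ RD q := e ▸ h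

private lemma finsupp_eq_single {R : Type} [CommRing R] (f : {i : ℤ // i ≠ 0} →₀ R)
    (a : {i : ℤ // i ≠ 0}) (h : ∀ b : {i : ℤ // i ≠ 0}, b.1 ≠ a.1 → f b = 0) :
    f = Finsupp.single a (f a) := by
  ext b
  rcases eq_or_ne b a with rfl | hb
  · simp
  · rw [Finsupp.single_apply, if_neg (Ne.symm hb), h b (fun hb' => hb (Subtype.ext hb'))]

private lemma wgt_mul_mem {R : Type} [CommRing R] (RD : ℤ → AddSubgroup R)
    (hmulR : ∀ (p q : ℤ) (a b : R), a ∈ RD p → b ∈ RD q → a * b ∈ RD (p + q))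
    (δ : R) (hδ : δ ∈ RD 1) (i j m n : ℤ) (hij : i + j ≠ 0)
    (α β : R) (hα : α ∈ RD (if i < 0 then m - 1 else m))
    (hβ : β ∈ RD (if j < 0 then n - 1 else n)) :
    wgt δ i j * (α * β) ∈ RD (if i + j < 0 then m + n - 1 else m + n) := by
  unfold wgt
  split_ifs at hα hβ ⊢ <;>
    first
      | omega
      | exact mem_of_eq RD (hmulR 1 _ δ _ hδ (hmulR _ _ _ _ hα hβ)) (by omega)
      | (rw [one_mul]; exact mem_of_eq RD (hmulR _ _ _ _ hα hβ) (by omega))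

/-- If `S`, `R` are graded, `res` is graded, `gys` raises degree by `1` and `δ` has
degree `1`, then the insertion product is additive for the grading `deg⁽²⁾`:
the product of homogeneous elements of `deg⁽¹⁾`-degrees `i, j` and `deg⁽²⁾`-degrees
`m, n` is homogeneous of `deg⁽¹⁾`-degree `i + j` and `deg⁽²⁾`-degree `m + n`. -/
theorem insertion_product_deg_two_additive {S R : Type} [CommRing S] [CommRing R]
    (d : InsertionData S R)
    (SD : ℤ → AddSubgroup S) (RD : ℤ → AddSubgroup R)
    (hmulS : ∀ (p q : ℤ) (a b : S), a ∈ SD p → b ∈ SD q → a * b ∈ SD (p + q))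
    (hmulR : ∀ (p q : ℤ) (a b : R), a ∈ RD p → b ∈ RD q → a * b ∈ RD (p + q))
    (hres : ∀ (p : ℤ) (a : S), a ∈ SD p → d.res a ∈ RD p)
    (hgys : ∀ (p : ℤ) (x : R), x ∈ RD p → d.gys x ∈ SD (p + 1))
    (hδ : d.δ ∈ RD 1)
    (i j m n : ℤ) (x y : Hins S R)
    (hx : homogTwo SD RD i m x) (hy : homogTwo SD RD j n y) :
    homogTwo SD RD (i + j) (m + n) (mulH d x y) := by
  obtain ⟨hx0, hxn⟩ := hx
  obtain ⟨hy0, hyn⟩ := hy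
  rcases eq_or_ne i 0 with rfl | hi
  · obtain ⟨hx2, hx1⟩ := hx0 rfl
    rcases eq_or_ne j 0 with rfl | hj
    · obtain ⟨hy2, hy1⟩ := hy0 rfl
      refine ⟨fun _ => ?_, fun h => absurd rfl h⟩
      constructor
      · simp [mulH, hx2, hy2]
      · simpa [mulH, hx2, hy2] using hmulS m n _ _ hx1 hy1
    · obtain ⟨hy1, hysupp, hyval⟩ := hyn hj
      simp only [zero_add]
      have hm : mulH d x y = (0, y.2.mapRange (fun β => d.res x.1 * β) (by simp)) := by
        simp [mulH, hx2, hy1]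
      rw [hm]
      refine ⟨fun h0 => absurd h0 hj, fun h => ?_⟩
      refine ⟨rfl, fun b hb => ?_, ?_⟩
      · simp [Finsupp.mapRange_apply, hysupp b hb]
      · simp only [Finsupp.mapRange_apply]
        rcases lt_or_ge j 0 with hj' | hj' <;>
          simp only [if_pos, if_neg, hj', hj'.not_gt] at hyval ⊢
        · exact mem_of_eq RD (hmulR _ _ _ _ (hres m _ hx1) hyval) (by omega)
        · exact hmulR _ _ _ _ (hres m _ hx1) hyval
  · obtain ⟨hx1, hxsupp, hxval⟩ := hxn hi
    rcases eq_or_ne j 0 with rfl | hj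
    · obtain ⟨hy2, hy1⟩ := hy0 rfl
      simp only [add_zero]
      have hm : mulH d x y = (0, x.2.mapRange (fun α => α * d.res y.1) (by simp)) := by
        simp [mulH, hx1, hy2]
      rw [hm]
      refine ⟨fun h0 => absurd h0 hi, fun h => ?_⟩
      refine ⟨rfl, fun b hb => ?_, ?_⟩
      · simp [Finsupp.mapRange_apply, hxsupp b hb]
      · simp only [Finsupp.mapRange_apply]
        rcases lt_or_ge i 0 with hi' | hi' <;>
          simp only [if_pos, if_neg, hi', hi'.not_gt] at hxval ⊢
        · exact mem_of_eq RD (hmulR _ _ _ _ hxval (hres n _ hy1)) (by omega)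
        · exact hmulR _ _ _ _ hxval (hres n _ hy1)
    · obtain ⟨hy1, hysupp, hyval⟩ := hyn hj
      set α := x.2 ⟨i, hi⟩ with hα'
      set β := y.2 ⟨j, hj⟩ with hβ'
      have hxs : x.2 = Finsupp.single ⟨i, hi⟩ α := finsupp_eq_single _ _ hxsupp
      have hys : y.2 = Finsupp.single ⟨j, hj⟩ β := finsupp_eq_single _ _ hysupp
      rcases eq_or_ne (i + j) 0 with hij | hij
      · rw [hij]
        refine ⟨fun _ => ?_, fun h => absurd rfl h⟩
        constructor
        · -- second component vanishes
          show y.2.mapRange (fun β => d.res x.1 * β) (by simp)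
              + x.2.mapRange (fun α => α * d.res y.1) (by simp)
              + x.2.sum (fun i' α' => y.2.sum (fun j' β' =>
                  if h : i'.1 + j'.1 ≠ 0 then
                    Finsupp.single ⟨i'.1 + j'.1, h⟩ (wgt d.δ i'.1 j'.1 * (α' * β'))
                  else 0)) = 0
          rw [hxs, hys, Finsupp.mapRange_single, Finsupp.mapRange_single,
            Finsupp.sum_single_index (by simp), Finsupp.sum_single_index (by simp),
            dif_neg (by simp [hij]), hx1, hy1]
          simp
        · -- first component
          show x.1 * y.1
              + x.2.sum (fun i' α' => d.gys (α' * y.2 ⟨-i'.1, neg_ne_zero.mpr i'.2⟩)) ∈ SD (m + n)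
          rw [hx1, zero_mul, zero_add, hxs, Finsupp.sum_single_index (by simp), hys,
            Finsupp.single_apply, if_pos (Subtype.ext (by simp; omega))]
          rcases hi.lt_or_gt with hi' | hi'
          · rw [if_pos hi'] at hxval
            rw [if_neg (by omega)] at hyval
            exact mem_of_eq SD (hgys _ _ (hmulR _ _ _ _ hxval hyval)) (by omega)
          · rw [if_neg (by omega)] at hxval
            rw [if_pos (by omega)] at hyval
            exact mem_of_eq SD (hgys _ _ (hmulR _ _ _ _ hxval hyval)) (by omega)
      · refine ⟨fun h0 => absurd h0 hij, fun h => ?_⟩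
        have hm : mulH d x y =
            (0, Finsupp.single ⟨i + j, hij⟩ (wgt d.δ i j * (α * β))) := by
          refine Prod.ext ?_ ?_
          · show x.1 * y.1
                + x.2.sum (fun i' α' => d.gys (α' * y.2 ⟨-i'.1, neg_ne_zero.mpr i'.2⟩)) = _
            rw [hx1, zero_mul, zero_add, hxs, Finsupp.sum_single_index (by simp), hys,
              Finsupp.single_apply,
              if_neg (fun hq => hij (by have := congrArg Subtype.val hq; simp at this; omega)),
              mul_zero, map_zero]
          · show y.2.mapRange (fun β => d.res x.1 * β) (by simp)
                + x.2.mapRange (fun α => α * d.res y.1) (by simp)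
                + x.2.sum (fun i' α' => y.2.sum (fun j' β' =>
                    if h : i'.1 + j'.1 ≠ 0 then
                      Finsupp.single ⟨i'.1 + j'.1, h⟩ (wgt d.δ i'.1 j'.1 * (α' * β'))
                    else 0)) = _
            rw [hxs, hys, Finsupp.mapRange_single, Finsupp.mapRange_single,
              Finsupp.sum_single_index (by simp), Finsupp.sum_single_index (by simp),
              dif_pos (by simpa using hij), hx1, hy1]
            simp
        rw [hm]
        refine ⟨rfl, fun b hb => ?_, ?_⟩
        · simp [Finsupp.single_apply, Subtype.ext_iff, Ne.symm hb]
        · simpa using wgt_mul_mem RD hmulR d.δ hδ i j m n hij α β hxval hyval
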